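/- Let X have positive Lebesgue measure, let λ_X be Lebesgue measure restricted to X and V := λ_X(X) ∈ (0,∞). Let p : X×X → (0,∞) be continuous. Let μ, ν ∈ P(X) be absolutely continuous with respect to λ_X with densities ρ_μ, ρ_ν satisfying ∫ |log ρ_μ| dμ < ∞ and ∫ |log ρ_ν| dν < ∞, and let γ ∈ Π(μ,ν). Then, with values in (−∞,+∞], H(γ | V^{−1} p·(λ_X ⊗ λ_X)) = log V + H(γ | p·(μ⊗ν)) + ∫ log ρ_μ dμ + ∫ log ρ_ν dν, where p·m denotes the measure with density p with respect to m; in particular the left-hand side is +∞ exactly when H(γ | p·(μ⊗ν)) = +∞. -/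

import Mathlib

open MeasureTheory Real Set
open scoped ENNReal

abbrev Pt (d : ℕ) := EuclideanSpace ℝ (Fin d)

-- Relative entropy `H(γ|ρ)`, with values in `(-∞, +∞]`.
open Classical in
noncomputable def relEnt {α : Type*} [MeasurableSpace α] (γ ρ : Measure α) : EReal :=
  if γ ≪ ρ ∧ Integrable (fun x => Real.log ((γ.rnDeriv ρ x).toReal)) γ
  then ((∫ x, Real.log ((γ.rnDeriv ρ x).toReal) ∂γ : ℝ) : EReal)
  else ⊤

lemma prodWithDensity {α β : Type*} [MeasurableSpace α] [MeasurableSpace β]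
    (μ : Measure α) (ν : Measure β) [SigmaFinite μ] [SigmaFinite ν]
    {f : α → ℝ≥0∞} {g : β → ℝ≥0∞} (hf : Measurable f) (hg : Measurable g)
    [SigmaFinite (μ.withDensity f)] [SigmaFinite (ν.withDensity g)] :
    (μ.withDensity f).prod (ν.withDensity g)
      = (μ.prod ν).withDensity (fun q => f q.1 * g q.2) := by
  refine Measure.prod_eq fun s t hs ht => ?_
  rw [withDensity_apply _ (hs.prod ht), ← Measure.prod_restrict,
    lintegral_prod_mul hf.aemeasurable hg.aemeasurable,
    withDensity_apply _ hs, withDensity_apply _ ht]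

/-- change of reference measure for the relative entropy of a coupling:
`H(γ | V⁻¹ p·(λ_X ⊗ λ_X)) = log V + H(γ | p·(μ⊗ν)) + ∫ log ρ_μ dμ + ∫ log ρ_ν dν`, and the
left-hand side is `+∞` exactly when `H(γ | p·(μ⊗ν)) = +∞`. -/
theorem stmt_17 {d : ℕ} (X : Set (Pt d)) (hXc : IsCompact X) (hXne : X.Nonempty)
    (hXpos : 0 < volume X)
    (V : ℝ) (hV : V = (volume X).toReal)
    (p : Pt d × Pt d → ℝ) (hp_cont : Continuous p) (hp_pos : ∀ q ∈ X ×ˢ X, 0 < p q)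
    (μ ν : Measure (Pt d)) [IsProbabilityMeasure μ] [IsProbabilityMeasure ν]
    (ρμ ρν : Pt d → ℝ) (hρμm : Measurable ρμ) (hρνm : Measurable ρν)
    (hρμ0 : ∀ x, 0 ≤ ρμ x) (hρν0 : ∀ x, 0 ≤ ρν x)
    (hμ : μ = (volume.restrict X).withDensity (fun x => ENNReal.ofReal (ρμ x)))
    (hν : ν = (volume.restrict X).withDensity (fun x => ENNReal.ofReal (ρν x)))
    (hμlog : Integrable (fun x => Real.log (ρμ x)) μ)
    (hνlog : Integrable (fun x => Real.log (ρν x)) ν)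
    (γ : Measure (Pt d × Pt d)) [IsProbabilityMeasure γ]
    (hγ1 : γ.map Prod.fst = μ) (hγ2 : γ.map Prod.snd = ν) :
    relEnt γ
        ((ENNReal.ofReal V)⁻¹ •
          ((volume.restrict X).prod (volume.restrict X)).withDensity
            (fun q => ENNReal.ofReal (p q)))
      = ((Real.log V : ℝ) : EReal)
        + relEnt γ ((μ.prod ν).withDensity (fun q => ENNReal.ofReal (p q)))
        + ((∫ x, Real.log (ρμ x) ∂μ : ℝ) : EReal)
        + ((∫ y, Real.log (ρν y) ∂ν : ℝ) : EReal) ∧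
    (relEnt γ
        ((ENNReal.ofReal V)⁻¹ •
          ((volume.restrict X).prod (volume.restrict X)).withDensity
            (fun q => ENNReal.ofReal (p q))) = ⊤
      ↔ relEnt γ ((μ.prod ν).withDensity (fun q => ENNReal.ofReal (p q))) = ⊤) := by
  haveI hfinlam : IsFiniteMeasure (volume.restrict X) :=
    ⟨by rw [Measure.restrict_apply_univ]; exact hXc.measure_lt_top⟩
  set m : Measure (Pt d × Pt d) := (volume.restrict X).prod (volume.restrict X) with hmdef
  set pp : Pt d × Pt d → ℝ≥0∞ := fun q => ENNReal.ofReal (p q) with hppdef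
  have hppm : Measurable pp := hp_cont.measurable.ennreal_ofReal
  set r : Pt d × Pt d → ℝ≥0∞ :=
    fun q => ENNReal.ofReal (ρμ q.1) * ENNReal.ofReal (ρν q.2) with hrdef
  have hrm : Measurable r :=
    ((hρμm.comp measurable_fst).ennreal_ofReal).mul ((hρνm.comp measurable_snd).ennreal_ofReal)
  have hV0 : 0 < V := hV ▸ ENNReal.toReal_pos hXpos.ne' hXc.measure_lt_top.ne
  set Vh : ℝ≥0∞ := ENNReal.ofReal V with hVhdef
  have hVh0 : Vh ≠ 0 := by
    rw [hVhdef]; exact (ENNReal.ofReal_pos.mpr hV0).ne'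
  have hVhtop : Vh ≠ ∞ := by rw [hVhdef]; exact ENNReal.ofReal_ne_top
  set ρ₁ : Measure (Pt d × Pt d) := Vh⁻¹ • m.withDensity pp with hρ₁def
  set ρ₂ : Measure (Pt d × Pt d) := (μ.prod ν).withDensity pp with hρ₂def
  set g : Pt d × Pt d → ℝ≥0∞ := fun q => Vh * r q with hgdef
  have hgm : Measurable g := by rw [hgdef]; exact measurable_const.mul hrm
  -- sigma-finiteness
  haveI : SigmaFinite ((volume.restrict X).withDensity fun x => ENNReal.ofReal (ρμ x)) := by
    rw [← hμ]; infer_instance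
  haveI : SigmaFinite ((volume.restrict X).withDensity fun x => ENNReal.ofReal (ρν x)) := by
    rw [← hν]; infer_instance
  have hprod : μ.prod ν = m.withDensity r := by
    rw [hμ, hν, hmdef, hrdef,
      prodWithDensity _ _ hρμm.ennreal_ofReal hρνm.ennreal_ofReal]
  haveI : SigmaFinite ρ₂ := by
    rw [hρ₂def, hppdef]
    exact SigmaFinite.withDensity_of_ne_top' fun q => ENNReal.ofReal_ne_top
  have hρ₁eq : ρ₁ = m.withDensity (Vh⁻¹ • pp) := by
    rw [hρ₁def, withDensity_smul' _ _ (ENNReal.inv_ne_top.mpr hVh0)]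
  haveI : SigmaFinite ρ₁ := by
    rw [hρ₁eq]
    refine SigmaFinite.withDensity_of_ne_top' fun q => ?_
    simp only [Pi.smul_apply, smul_eq_mul]
    exact ENNReal.mul_ne_top (ENNReal.inv_ne_top.mpr hVh0) (by rw [hppdef]; exact ENNReal.ofReal_ne_top)
  -- key measure identity : ρ₂ = ρ₁.withDensity g
  have hkey : ρ₂ = ρ₁.withDensity g := by
    rw [hρ₂def, hprod, ← withDensity_mul _ hrm hppm, hρ₁def, withDensity_smul_measure,
      ← withDensity_mul _ hppm hgm]
    have h1 : pp * g = Vh • (r * pp) := by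
      funext q
      simp only [Pi.mul_apply, Pi.smul_apply, smul_eq_mul, hgdef]
      ring
    rw [h1, withDensity_smul' _ _ hVhtop, smul_smul, ENNReal.inv_mul_cancel hVh0 hVhtop, one_smul]
  have hac21 : ρ₂ ≪ ρ₁ := by
    rw [hkey]; exact withDensity_absolutelyContinuous _ _
  -- γ gives no mass to zero sets of the densities
  have hzμ : γ {q : Pt d × Pt d | ρμ q.1 = 0} = 0 := by
    have hset : MeasurableSet {x : Pt d | ρμ x = 0} := hρμm (measurableSet_singleton 0)
    have h1 : γ {q : Pt d × Pt d | ρμ q.1 = 0} = μ {x | ρμ x = 0} := by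
      rw [← hγ1, Measure.map_apply measurable_fst hset]; rfl
    have h2 : ∫⁻ x in {x | ρμ x = 0}, ENNReal.ofReal (ρμ x) ∂(volume.restrict X)
        = ∫⁻ _ in {x | ρμ x = 0}, 0 ∂(volume.restrict X) :=
      setLIntegral_congr_fun hset (fun x hx => by
        simp only [mem_setOf_eq] at hx; simp [hx])
    rw [h1, hμ, withDensity_apply _ hset, h2, lintegral_zero]
  have hzν : γ {q : Pt d × Pt d | ρν q.2 = 0} = 0 := by
    have hset : MeasurableSet {x : Pt d | ρν x = 0} := hρνm (measurableSet_singleton 0)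
    have h1 : γ {q : Pt d × Pt d | ρν q.2 = 0} = ν {x | ρν x = 0} := by
      rw [← hγ2, Measure.map_apply measurable_snd hset]; rfl
    have h2 : ∫⁻ x in {x | ρν x = 0}, ENNReal.ofReal (ρν x) ∂(volume.restrict X)
        = ∫⁻ _ in {x | ρν x = 0}, 0 ∂(volume.restrict X) :=
      setLIntegral_congr_fun hset (fun x hx => by
        simp only [mem_setOf_eq] at hx; simp [hx])
    rw [h1, hν, withDensity_apply _ hset, h2, lintegral_zero]
  have hgz : γ {q : Pt d × Pt d | g q = 0} = 0 := by
    refine measure_mono_null (fun q hq => ?_) (measure_union_null hzμ hzν)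
    simp only [mem_setOf_eq, hgdef, hrdef, mul_eq_zero, ENNReal.ofReal_eq_zero] at hq
    rcases hq with h | h | h
    · exact absurd h hVh0
    · exact Or.inl (le_antisymm h (hρμ0 _))
    · exact Or.inr (le_antisymm h (hρν0 _))
  -- absolute continuity transfer
  have hACmp : γ ≪ ρ₁ → γ ≪ ρ₂ := by
    intro h1
    rw [hkey]
    refine Measure.AbsolutelyContinuous.mk fun s hs h0 => ?_
    rw [withDensity_apply _ hs] at h0
    have hae : ∀ᵐ q ∂(ρ₁.restrict s), g q = 0 := (lintegral_eq_zero_iff hgm).mp h0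
    have hns : MeasurableSet {q : Pt d × Pt d | g q ≠ 0} :=
      (hgm (measurableSet_singleton 0)).compl
    have h2 : ρ₁ ({q | g q ≠ 0} ∩ s) = 0 := by
      have := ae_iff.mp hae
      rwa [Measure.restrict_apply hns] at this
    have hsub : s ⊆ ({q : Pt d × Pt d | g q ≠ 0} ∩ s) ∪ {q | g q = 0} := by
      intro q hq
      by_cases hgq : g q = 0
      · exact Or.inr hgq
      · exact Or.inl ⟨hgq, hq⟩
    exact measure_mono_null hsub (measure_union_null (h1 h2) hgz)
  -- Radon–Nikodym derivative identity
  have hDeq : ∀ _ : γ ≪ ρ₂, γ.rnDeriv ρ₁ =ᵐ[γ] fun q => γ.rnDeriv ρ₂ q * g q := by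
    intro h2
    have h1 : γ ≪ ρ₁ := h2.trans hac21
    have chain : γ.rnDeriv ρ₂ * ρ₂.rnDeriv ρ₁ =ᵐ[ρ₁] γ.rnDeriv ρ₁ :=
      Measure.rnDeriv_mul_rnDeriv h2
    have hgrn : ρ₂.rnDeriv ρ₁ =ᵐ[ρ₁] g := by
      rw [hkey]; exact Measure.rnDeriv_withDensity ρ₁ hgm
    filter_upwards [h1.ae_le chain, h1.ae_le hgrn] with q hq1 hq2
    rw [← hq1, Pi.mul_apply, hq2]
  -- the log identity γ-a.e.
  have hlog : ∀ _ : γ ≪ ρ₂,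
      (fun q => Real.log ((γ.rnDeriv ρ₁ q).toReal)) =ᵐ[γ]
        fun q => Real.log V + Real.log (ρμ q.1) + Real.log (ρν q.2)
          + Real.log ((γ.rnDeriv ρ₂ q).toReal) := by
    intro h2
    have hpos := Measure.rnDeriv_pos h2
    have hlt := h2.ae_le (Measure.rnDeriv_lt_top γ ρ₂)
    have hμ0 : ∀ᵐ q ∂γ, ρμ q.1 ≠ 0 := by
      rw [ae_iff]; simpa using hzμ
    have hν0 : ∀ᵐ q ∂γ, ρν q.2 ≠ 0 := by
      rw [ae_iff]; simpa using hzν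
    filter_upwards [hDeq h2, hpos, hlt, hμ0, hν0] with q hq hqpos hqlt hqμ hqν
    have htr : (γ.rnDeriv ρ₁ q).toReal
        = (γ.rnDeriv ρ₂ q).toReal * (V * (ρμ q.1 * ρν q.2)) := by
      rw [hq, ENNReal.toReal_mul]
      congr 1
      rw [hgdef]
      simp only [hrdef]
      rw [ENNReal.toReal_mul, ENNReal.toReal_mul, hVhdef,
        ENNReal.toReal_ofReal hV0.le, ENNReal.toReal_ofReal (hρμ0 _),
        ENNReal.toReal_ofReal (hρν0 _)]
    have hd2 : (γ.rnDeriv ρ₂ q).toReal ≠ 0 := ENNReal.toReal_ne_zero.mpr ⟨hqpos.ne', hqlt.ne⟩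
    rw [htr, Real.log_mul hd2 (mul_ne_zero hV0.ne' (mul_ne_zero hqμ hqν)),
      Real.log_mul hV0.ne' (mul_ne_zero hqμ hqν), Real.log_mul hqμ hqν]
    ring
  -- integrability of the marginal log densities against γ
  have hFm : AEStronglyMeasurable (fun x => Real.log (ρμ x)) (γ.map Prod.fst) :=
    (Real.measurable_log.comp hρμm).aestronglyMeasurable
  have hGm : AEStronglyMeasurable (fun x => Real.log (ρν x)) (γ.map Prod.snd) :=
    (Real.measurable_log.comp hρνm).aestronglyMeasurable
  have hFint : Integrable (fun q : Pt d × Pt d => Real.log (ρμ q.1)) γ :=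
    (integrable_map_measure hFm measurable_fst.aemeasurable).mp (by rwa [hγ1])
  have hGint : Integrable (fun q : Pt d × Pt d => Real.log (ρν q.2)) γ :=
    (integrable_map_measure hGm measurable_snd.aemeasurable).mp (by rwa [hγ2])
  have hIμ : ∫ x, Real.log (ρμ x) ∂μ = ∫ q, Real.log (ρμ q.1) ∂γ := by
    rw [← hγ1, integral_map measurable_fst.aemeasurable hFm]
  have hIν : ∫ y, Real.log (ρν y) ∂ν = ∫ q, Real.log (ρν q.2) ∂γ := by
    rw [← hγ2, integral_map measurable_snd.aemeasurable hGm]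
  have hsumint : Integrable
      (fun q : Pt d × Pt d => Real.log V + Real.log (ρμ q.1) + Real.log (ρν q.2)) γ :=
    ((integrable_const _).add hFint).add hGint
  -- integrability equivalence
  have hIntIff : ∀ _ : γ ≪ ρ₂,
      (Integrable (fun q => Real.log ((γ.rnDeriv ρ₁ q).toReal)) γ
        ↔ Integrable (fun q => Real.log ((γ.rnDeriv ρ₂ q).toReal)) γ) := by
    intro h2
    constructor
    · intro h
      have he : (fun q => Real.log ((γ.rnDeriv ρ₂ q).toReal)) =ᵐ[γ]
          fun q => Real.log ((γ.rnDeriv ρ₁ q).toReal)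
            - (Real.log V + Real.log (ρμ q.1) + Real.log (ρν q.2)) := by
        filter_upwards [hlog h2] with q hq
        rw [hq]; ring
      exact (h.sub hsumint).congr he.symm
    · intro h
      exact (hsumint.add h).congr (hlog h2).symm
  by_cases hP : γ ≪ ρ₂ ∧ Integrable (fun q => Real.log ((γ.rnDeriv ρ₂ q).toReal)) γ
  · have h2 := hP.1
    have h1 : γ ≪ ρ₁ := h2.trans hac21
    have hL1 : Integrable (fun q => Real.log ((γ.rnDeriv ρ₁ q).toReal)) γ :=
      (hIntIff h2).mpr hP.2
    have hint : ∫ q, Real.log ((γ.rnDeriv ρ₁ q).toReal) ∂γ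
        = Real.log V + ∫ q, Real.log ((γ.rnDeriv ρ₂ q).toReal) ∂γ
          + ∫ x, Real.log (ρμ x) ∂μ + ∫ y, Real.log (ρν y) ∂ν := by
      have hconstF : Integrable (fun q : Pt d × Pt d => Real.log V + Real.log (ρμ q.1)) γ :=
        (integrable_const _).add hFint
      rw [integral_congr_ae (hlog h2), hIμ, hIν,
        integral_add hsumint hP.2, integral_add hconstF hGint,
        integral_add (integrable_const _) hFint, integral_const]
      simp only [measure_univ, ENNReal.toReal_one, probReal_univ, smul_eq_mul, one_mul]
      ring
    unfold relEnt
    rw [if_pos ⟨h1, hL1⟩, if_pos hP]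
    refine ⟨?_, by simp⟩
    rw [hint]
    norm_cast
  · have h1 : ¬ (γ ≪ ρ₁ ∧ Integrable (fun q => Real.log ((γ.rnDeriv ρ₁ q).toReal)) γ) := by
      rintro ⟨h1, hL1⟩
      exact hP ⟨hACmp h1, (hIntIff (hACmp h1)).mp hL1⟩
    unfold relEnt
    rw [if_neg h1, if_neg hP]
    refine ⟨?_, by simp⟩
    rw [EReal.coe_add_top, EReal.top_add_coe, EReal.top_add_coe]
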